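/- arXiv:2506.14207 — 4 statements merged into one kernel-verified Lean document; each statement's English description precedes it below -/
import Mathlib

section
/- Let q = p^f with f odd (f > 1) and x ∈ 𝔽_q \ 𝔽_p. Then the stabilizer in GL₂(𝔽_p) of the point [1:x] ∈ ℙ¹(𝔽_q) equals the center Z_p of GL₂(𝔽_p) (the scalar matrices). -/
open Matrix Projectivization

/-- The natural action of `GL₂` over a field on the projective line over that field. -/
noncomputable instance glProjAct {K : Type*} [Field K] :
    MulAction (GL (Fin 2) K) (Projectivization K (Fin 2 → K)) where
  smul g x := x.map (Matrix.mulVecLin (g : Matrix (Fin 2) (Fin 2) K))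
      (fun v w h => (Matrix.GeneralLinearGroup.toLin g).toLinearEquiv.injective (by simpa using h))
  one_smul x := by
    induction x using Projectivization.ind with
    | h v hv =>
      show Projectivization.map _ _ _ = _
      erw [Projectivization.map_mk]
      simp [Matrix.mulVecLin_apply]
  mul_smul g h x := by
    induction x using Projectivization.ind with
    | h v hv =>
      show Projectivization.map _ _ _ = Projectivization.map _ _ (Projectivization.map _ _ _)
      erw [Projectivization.map_mk, Projectivization.map_mk]
      simp [Matrix.mulVecLin_apply, Matrix.mulVec_mulVec]

/-- The action of `GL₂(F)` on the projective line over an extension `L` of `F`,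
via matrix multiplication on homogeneous coordinates (entries of the matrix being
mapped into `L` by the algebra map). -/
noncomputable instance glProjActOf {F L : Type*} [Field F] [Field L] [Algebra F L] :
    MulAction (GL (Fin 2) F) (Projectivization L (Fin 2 → L)) :=
  MulAction.compHom _ (Matrix.GeneralLinearGroup.map (n := Fin 2) (algebraMap F L))


private lemma quad_key (p f : ℕ) [Fact p.Prime] (hf1 : Odd f) (hf2 : 1 < f)
    (x : GaloisField p f) (hx : x ∉ Set.range (algebraMap (ZMod p) (GaloisField p f)))
    (a b c : ZMod p)
    (h : algebraMap (ZMod p) (GaloisField p f) b * x ^ 2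
        + algebraMap (ZMod p) (GaloisField p f) a * x
        + algebraMap (ZMod p) (GaloisField p f) c = 0) :
    b = 0 ∧ a = 0 ∧ c = 0 := by
  set φ := algebraMap (ZMod p) (GaloisField p f) with hφ
  have hinj : Function.Injective φ := φ.injective
  have hint : IsIntegral (ZMod p) x := .of_finite _ _
  have hb : b = 0 := by
    by_contra hb
    set P : Polynomial (ZMod p) :=
      Polynomial.C b * Polynomial.X ^ 2 + Polynomial.C a * Polynomial.X + Polynomial.C c with hP
    have hPx : Polynomial.aeval x P = 0 := by
      simp only [hP, map_add, _root_.map_mul, map_pow, Polynomial.aeval_C, Polynomial.aeval_X]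
      exact h
    have hdeg : P.natDegree = 2 := by
      unfold P
      compute_degree!
    have hP0 : P ≠ 0 := fun h0 => by simp [h0] at hdeg
    have hdvd := minpoly.dvd (ZMod p) x hPx
    have hle : (minpoly (ZMod p) x).natDegree ≤ 2 :=
      hdeg ▸ Polynomial.natDegree_le_of_dvd hdvd hP0
    have hdvdf : (minpoly (ZMod p) x).natDegree ∣ f := by
      have := minpoly.degree_dvd (K := ZMod p) hint
      rwa [GaloisField.finrank p (by omega)] at this
    have hodd : Odd (minpoly (ZMod p) x).natDegree := by
      rcases hdvdf with ⟨k, hk⟩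
      rw [hk, Nat.odd_mul] at hf1
      exact hf1.1
    have hpos := minpoly.natDegree_pos hint
    have h1 : (minpoly (ZMod p) x).natDegree = 1 := by
      interval_cases h : (minpoly (ZMod p) x).natDegree
      · rfl
      · exact absurd hodd (by decide)
    exact hx (by simpa using (minpoly.natDegree_eq_one_iff).mp h1)
  subst hb
  simp only [map_zero, zero_mul, zero_add] at h
  have ha : a = 0 := by
    by_contra ha
    apply hx
    refine ⟨-c / a, ?_⟩
    have hφa : φ a ≠ 0 := fun h0 => ha (hinj (by simpa using h0))
    rw [map_div₀, map_neg, div_eq_iff hφa]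
    linear_combination -h
  subst ha
  simp only [map_zero, zero_mul, zero_add] at h
  exact ⟨rfl, rfl, hinj (by simpa using h)⟩

/-- Let `q = p^f` with `f` odd, `f > 1`, and `x ∈ 𝔽_q \ 𝔽_p`.  Then the stabilizer in
`GL₂(𝔽_p)` of the point `[1:x] ∈ ℙ¹(𝔽_q)` is the center of `GL₂(𝔽_p)`, i.e. the
scalar matrices. -/
theorem stabilizer_in_GL2p_eq_center_odd (p f : ℕ) [Fact p.Prime] (hf1 : Odd f) (hf2 : 1 < f)
    (x : GaloisField p f) (hx : x ∉ Set.range (algebraMap (ZMod p) (GaloisField p f))) :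
    ∀ g : GL (Fin 2) (ZMod p),
      g ∈ MulAction.stabilizer (GL (Fin 2) (ZMod p))
          (Projectivization.mk (GaloisField p f) (![1, x] : Fin 2 → GaloisField p f)
            (by intro h; simpa using congrFun h 0)) ↔
      ((g : Matrix (Fin 2) (Fin 2) (ZMod p)) 0 1 = 0 ∧
        (g : Matrix (Fin 2) (Fin 2) (ZMod p)) 1 0 = 0 ∧
        (g : Matrix (Fin 2) (Fin 2) (ZMod p)) 0 0 = (g : Matrix (Fin 2) (Fin 2) (ZMod p)) 1 1) := by
  intro g
  set φ := algebraMap (ZMod p) (GaloisField p f) with hφ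
  set A := (g : Matrix (Fin 2) (Fin 2) (ZMod p)) with hA
  set v : Fin 2 → GaloisField p f := ![1, x] with hv
  have hv0 : v ≠ 0 := by intro h; simpa [hv] using congrFun h 0
  have hrfl : g • (Projectivization.mk (GaloisField p f) v hv0)
      = Projectivization.map
          (Matrix.mulVecLin (((Matrix.GeneralLinearGroup.map (n := Fin 2) φ g) :
              Matrix (Fin 2) (Fin 2) (GaloisField p f))))
          (fun v w h => (Matrix.GeneralLinearGroup.toLin (Matrix.GeneralLinearGroup.map (n := Fin 2)
              φ g)).toLinearEquiv.injective (by simpa using h))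
          (Projectivization.mk (GaloisField p f) v hv0) := rfl
  have hvec : Matrix.mulVecLin (((Matrix.GeneralLinearGroup.map (n := Fin 2) φ g) :
      Matrix (Fin 2) (Fin 2) (GaloisField p f))) v
      = ![φ (A 0 0) + φ (A 0 1) * x, φ (A 1 0) + φ (A 1 1) * x] := by
    funext i
    fin_cases i <;>
      simp [hv, Matrix.mulVecLin_apply, Matrix.mulVec, dotProduct, Fin.sum_univ_two,
        Matrix.GeneralLinearGroup.map, Matrix.map_apply, hA]
  erw [MulAction.mem_stabilizer_iff, hrfl, Projectivization.map_mk,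
    Projectivization.mk_eq_mk_iff', hvec]
  constructor
  · rintro ⟨t, ht⟩
    have h0 := congrFun ht 0
    have h1 := congrFun ht 1
    simp [hv] at h0 h1
    -- h0 : t = φ (A 0 0) + φ (A 0 1) * x ;  h1 : t * x = φ (A 1 0) + φ (A 1 1) * x
    have hq : φ (A 0 1) * x ^ 2 + φ (A 0 0 - A 1 1) * x + φ (-(A 1 0)) = 0 := by
      simp only [map_sub, map_neg]
      linear_combination h1 - x * h0
    obtain ⟨hb, had, hc⟩ := quad_key p f hf1 hf2 x hx _ _ _ hq
    refine ⟨hb, ?_, ?_⟩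
    · have := neg_eq_zero.mp hc; exact this
    · exact sub_eq_zero.mp had
  · rintro ⟨hb, hc, had⟩
    refine ⟨φ (A 0 0), ?_⟩
    funext i
    fin_cases i <;> simp [hv, hb, hc, ← had]
end

section
/- Let q = p^f with f even and x ∈ 𝔽_q not in the subfield 𝔽_{p²}. Then the stabilizer in GL₂(𝔽_p) of [1:x] ∈ ℙ¹(𝔽_q) equals the center Z_p of GL₂(𝔽_p). -/
open Matrix Projectivization

lemma smul_mk_eq_aux {K : Type*} [Field K] (g : GL (Fin 2) K) (v : Fin 2 → K) (hv : v ≠ 0)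
    (hw : ((g : Matrix (Fin 2) (Fin 2) K)).mulVec v ≠ 0) :
    g • Projectivization.mk K v hv = Projectivization.mk K _ hw :=
  Projectivization.map_mk (Matrix.mulVecLin (g : Matrix (Fin 2) (Fin 2) K))
    (fun a b h => (Matrix.GeneralLinearGroup.toLin g).toLinearEquiv.injective (by simpa using h))
    v hv

lemma smul_mk_eq_of {F L : Type*} [Field F] [Field L] [Algebra F L] (g : GL (Fin 2) F)
    (v : Fin 2 → L) (hv : v ≠ 0)
    (hw : ((((Matrix.GeneralLinearGroup.map (n := Fin 2) (algebraMap F L)) g : GL (Fin 2) L) :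
        Matrix (Fin 2) (Fin 2) L)).mulVec v ≠ 0) :
    g • Projectivization.mk L v hv = Projectivization.mk L _ hw :=
  smul_mk_eq_aux (Matrix.GeneralLinearGroup.map (n := Fin 2) (algebraMap F L) g) v hv hw

lemma key_quad {p f : ℕ} [Fact p.Prime] (x : GaloisField p f) (hx : x ^ p ^ 2 ≠ x)
    (α β γ : GaloisField p f) (hα : α ^ p = α) (hβ : β ^ p = β) (hγ : γ ^ p = γ)
    (h : α * x ^ 2 + β * x + γ = 0) : α = 0 ∧ β = 0 ∧ γ = 0 := by
  have hx2 : (x ^ p) ^ p ≠ x := by rwa [pow_two, pow_mul] at hx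
  set F := frobenius (GaloisField p f) p with hF
  have hFdef : ∀ y : GaloisField p f, F y = y ^ p := fun y => frobenius_def p y
  have h2 : α * (x ^ p) ^ 2 + β * (x ^ p) + γ = 0 := by
    have := congrArg F h
    simp only [map_add, _root_.map_mul, map_pow, map_zero] at this
    simp only [hFdef, hα, hβ, hγ] at this
    exact this
  have hsub : (x - x ^ p) * (α * (x + x ^ p) + β) = 0 := by
    linear_combination h - h2
  have hxne : x - x ^ p ≠ 0 := by
    intro hc
    have hxx : x = x ^ p := sub_eq_zero.1 hc
    exact hx2 (by rw [← hxx, ← hxx])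
  have h3 : α * (x + x ^ p) + β = 0 := by
    rcases mul_eq_zero.1 hsub with hc | hc
    · exact absurd hc hxne
    · exact hc
  have h4 : α * (x ^ p + (x ^ p) ^ p) + β = 0 := by
    have := congrArg F h3
    simp only [map_add, _root_.map_mul, map_pow, map_zero] at this
    simp only [hFdef, hα, hβ] at this
    exact this
  have hα0 : α = 0 := by
    have h5 : α * (x - (x ^ p) ^ p) = 0 := by linear_combination h3 - h4
    rcases mul_eq_zero.1 h5 with hc | hc
    · exact hc
    · exact absurd (sub_eq_zero.1 hc).symm hx2
  have hβ0 : β = 0 := by rw [hα0] at h3; simpa using h3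
  refine ⟨hα0, hβ0, ?_⟩
  rw [hα0, hβ0] at h; simpa using h

/-- Let `q = p^f` with `f` even, and `x ∈ 𝔽_q` not in the subfield `𝔽_{p²}`
(equivalently `x^(p²) ≠ x`).  Then the stabilizer in `GL₂(𝔽_p)` of `[1:x] ∈ ℙ¹(𝔽_q)`
is the center of `GL₂(𝔽_p)`, i.e. the scalar matrices. -/
theorem stabilizer_in_GL2p_eq_center_even (p f : ℕ) [Fact p.Prime] (hf : Even f)
    (x : GaloisField p f) (hx : x ^ p ^ 2 ≠ x) :
    ∀ g : GL (Fin 2) (ZMod p),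
      g ∈ MulAction.stabilizer (GL (Fin 2) (ZMod p))
          (Projectivization.mk (GaloisField p f) (![1, x] : Fin 2 → GaloisField p f)
            (by intro h; simpa using congrFun h 0)) ↔
      ((g : Matrix (Fin 2) (Fin 2) (ZMod p)) 0 1 = 0 ∧
        (g : Matrix (Fin 2) (Fin 2) (ZMod p)) 1 0 = 0 ∧
        (g : Matrix (Fin 2) (Fin 2) (ZMod p)) 0 0 = (g : Matrix (Fin 2) (Fin 2) (ZMod p)) 1 1) := by
  intro g
  set φ := algebraMap (ZMod p) (GaloisField p f) with hφ
  set M : Matrix (Fin 2) (Fin 2) (GaloisField p f) :=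
    ((Matrix.GeneralLinearGroup.map (n := Fin 2) φ g : GL (Fin 2) (GaloisField p f)) :
      Matrix (Fin 2) (Fin 2) (GaloisField p f)) with hM
  have hne : (![1, x] : Fin 2 → GaloisField p f) ≠ 0 := by
    intro h; simpa using congrFun h 0
  have hMne : M.mulVec ![1, x] ≠ 0 := by
    intro h
    have := (Matrix.GeneralLinearGroup.toLin
      (Matrix.GeneralLinearGroup.map (n := Fin 2) φ g)).toLinearEquiv.injective
      (a₁ := ![1, x]) (a₂ := 0) (by simpa [hM] using h)
    exact hne this
  have hMentry : ∀ i j, M i j = φ ((g : Matrix (Fin 2) (Fin 2) (ZMod p)) i j) := by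
    intro i j; rfl
  have hvec : M.mulVec ![1, x] =
      ![φ ((g : Matrix (Fin 2) (Fin 2) (ZMod p)) 0 0) +
          φ ((g : Matrix (Fin 2) (Fin 2) (ZMod p)) 0 1) * x,
        φ ((g : Matrix (Fin 2) (Fin 2) (ZMod p)) 1 0) +
          φ ((g : Matrix (Fin 2) (Fin 2) (ZMod p)) 1 1) * x] := by
    funext i
    fin_cases i <;>
      simp [Matrix.mulVec, dotProduct, Fin.sum_univ_two, hMentry]
  have hfix : ∀ t : ZMod p, (φ t) ^ p = φ t := by
    intro t
    rw [← map_pow, ZMod.pow_card]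
  have hinj : Function.Injective φ := φ.injective
  rw [MulAction.mem_stabilizer_iff, smul_mk_eq_of g ![1, x] _ hMne]
  constructor
  · intro heq
    obtain ⟨u, hu⟩ := (Projectivization.mk_eq_mk_iff _ _ _ _ _).1 heq
    rw [hvec] at hu
    have h0 := congrFun hu 0
    have h1 := congrFun hu 1
    simp [Pi.smul_apply, Units.smul_def, smul_eq_mul] at h0 h1
    have hmain : φ ((g : Matrix (Fin 2) (Fin 2) (ZMod p)) 0 1) * x ^ 2 +
        (φ ((g : Matrix (Fin 2) (Fin 2) (ZMod p)) 0 0) -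
          φ ((g : Matrix (Fin 2) (Fin 2) (ZMod p)) 1 1)) * x +
        (- φ ((g : Matrix (Fin 2) (Fin 2) (ZMod p)) 1 0)) = 0 := by
      rw [h0] at h1
      linear_combination h1
    obtain ⟨hA, hB, hC⟩ := key_quad x hx _ _ _ (hfix _)
      (by rw [← map_sub]; exact hfix _) (by rw [← map_neg]; exact hfix _) hmain
    refine ⟨hinj (by simpa using hA),
      hinj (by rw [map_zero]; exact neg_eq_zero.1 hC),
      hinj (sub_eq_zero.1 hB)⟩
  · rintro ⟨hb, hc, had⟩
    have ha : (g : Matrix (Fin 2) (Fin 2) (ZMod p)) 0 0 ≠ 0 := by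
      intro h0
      have hgu : IsUnit (g : Matrix (Fin 2) (Fin 2) (ZMod p)) := ⟨g, rfl⟩
      have hdet : IsUnit ((g : Matrix (Fin 2) (Fin 2) (ZMod p)).det) :=
        (Matrix.isUnit_iff_isUnit_det _).1 hgu
      rw [Matrix.det_fin_two, hb, hc, h0] at hdet
      simp at hdet
    have hφa : φ ((g : Matrix (Fin 2) (Fin 2) (ZMod p)) 0 0) ≠ 0 :=
      fun h => ha (hinj (by simpa using h))
    refine (Projectivization.mk_eq_mk_iff _ _ _ _ _).2
      ⟨Units.mk0 (φ ((g : Matrix (Fin 2) (Fin 2) (ZMod p)) 0 0)) hφa, ?_⟩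
    rw [hvec]
    funext i
    fin_cases i <;> simp [hb, ← had, hc, mul_comm]
end

section
/- Let q = p^f with f odd, f > 1. The number of GL₂(𝔽_p)-orbits on ℙ¹(𝔽_q) \ ℙ¹(𝔽_p) is (p^{f−1} − 1)/(p² − 1), and every such orbit has cardinality p(p² − 1). -/
open Matrix Projectivization

section aux
variable {F L : Type*} [Field F] [Field L] [Algebra F L]

theorem smul_mk_ext (g : GL (Fin 2) F) (v : Fin 2 → L) (hv : v ≠ 0)
    (h' : ((g : Matrix (Fin 2) (Fin 2) F)).map (algebraMap F L) *ᵥ v ≠ 0) :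
    g • Projectivization.mk L v hv =
      Projectivization.mk L (((g : Matrix (Fin 2) (Fin 2) F)).map (algebraMap F L) *ᵥ v) h' := by
  set g' := Matrix.GeneralLinearGroup.map (n := Fin 2) (algebraMap F L) g with hg'
  show Projectivization.map (Matrix.mulVecLin (g' : Matrix (Fin 2) (Fin 2) L))
      (fun v w h => (Matrix.GeneralLinearGroup.toLin g').toLinearEquiv.injective (by simpa using h))
      (Projectivization.mk L v hv) = _
  erw [Projectivization.map_mk]
  congr 1


end aux

section proj
variable {L : Type*} [Field L]

theorem vecne (x : L) : (![x, 1] : Fin 2 → L) ≠ 0 :=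
  fun h => one_ne_zero (α := L) (by simpa using congrFun h 1)

theorem vecne0 : (![(1:L), 0] : Fin 2 → L) ≠ 0 :=
  fun h => one_ne_zero (α := L) (by simpa using congrFun h 0)

noncomputable def ptMk (x : L) : Projectivization L (Fin 2 → L) :=
  Projectivization.mk L ![x, 1] (vecne x)

noncomputable def ptInf : Projectivization L (Fin 2 → L) :=
  Projectivization.mk L ![(1:L), 0] vecne0

theorem ptMk_inj {x y : L} (h : ptMk x = ptMk y) : x = y := by
  rw [ptMk, ptMk, Projectivization.mk_eq_mk_iff'] at h
  obtain ⟨a, ha⟩ := h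
  have h0 := congrFun ha 0
  have h1 := congrFun ha 1
  simp at h0 h1
  rw [← h0, h1, one_mul]

theorem ptMk_ne_inf (x : L) : ptMk x ≠ ptInf := by
  rw [ptMk, ptInf, Ne, Projectivization.mk_eq_mk_iff']
  rintro ⟨a, ha⟩
  have h1 := congrFun ha 1
  simp at h1

theorem pt_cases (P : Projectivization L (Fin 2 → L)) : P = ptInf ∨ ∃ x, P = ptMk x := by
  induction P using Projectivization.ind with
  | h v hv =>
    by_cases h1 : v 1 = 0
    · left
      have h0 : v 0 ≠ 0 := by
        intro h0; apply hv; funext i; fin_cases i <;> simpa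
      rw [ptInf, Projectivization.mk_eq_mk_iff']
      exact ⟨v 0, by funext i; fin_cases i <;> simp [h0, h1]⟩
    · right
      refine ⟨v 0 / v 1, ?_⟩
      rw [ptMk, Projectivization.mk_eq_mk_iff']
      exact ⟨v 1, by funext i; fin_cases i <;> simp [h1, mul_div_cancel₀ _ h1, mul_comm]⟩

end proj

section rat
variable {F L : Type*} [Field F] [Field L] [Algebra F L]

/-- The set of `𝔽_p`-rational points. -/
def RatSet (F L : Type*) [Field F] [Field L] [Algebra F L] :
    Set (Projectivization L (Fin 2 → L)) :=
  {P | ∃ (a b : F) (h : (![algebraMap F L a, algebraMap F L b] : Fin 2 → L) ≠ 0),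
    P = Projectivization.mk L _ h}

theorem algVec_ne {a b : F} (h : (![a, b] : Fin 2 → F) ≠ 0) :
    (![algebraMap F L a, algebraMap F L b] : Fin 2 → L) ≠ 0 := by
  intro hc
  apply h
  have h0 := congrFun hc 0
  have h1 := congrFun hc 1
  simp only [Matrix.cons_val_zero, Matrix.cons_val_one, Matrix.head_cons, Pi.zero_apply] at h0 h1
  rw [← map_zero (algebraMap F L)] at h0 h1
  funext i
  fin_cases i <;>
    simp [(algebraMap F L).injective h0, (algebraMap F L).injective h1]

theorem map_mulVec_alg (M : Matrix (Fin 2) (Fin 2) F) (v : Fin 2 → F) :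
    M.map (algebraMap F L) *ᵥ (fun i => algebraMap F L (v i)) =
      fun i => algebraMap F L ((M *ᵥ v) i) := by
  funext i
  simp [Matrix.mulVec, dotProduct]

theorem vec_alg_eq (a b : F) :
    (![algebraMap F L a, algebraMap F L b] : Fin 2 → L) =
      fun i => algebraMap F L ((![a, b] : Fin 2 → F) i) := by
  funext i; fin_cases i <;> simp

theorem smul_rat_mem (g : GL (Fin 2) F) {P : Projectivization L (Fin 2 → L)}
    (hP : P ∈ RatSet F L) : g • P ∈ RatSet F L := by
  obtain ⟨a, b, h, rfl⟩ := hP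
  have hab : (![a, b] : Fin 2 → F) ≠ 0 := by
    intro hc; apply h
    have h0 := congrFun hc 0
    have h1 := congrFun hc 1
    simp only [Matrix.cons_val_zero, Matrix.cons_val_one, Matrix.head_cons,
      Pi.zero_apply] at h0 h1
    funext i; fin_cases i <;> simp [h0, h1]
  set w : Fin 2 → F := (g : Matrix (Fin 2) (Fin 2) F) *ᵥ ![a, b] with hw
  have hwne : w ≠ 0 := by
    intro hc
    apply hab
    have := congrArg ((g⁻¹ : GL (Fin 2) F) : Matrix (Fin 2) (Fin 2) F).mulVec hc
    rwa [Matrix.mulVec_mulVec, ← Matrix.GeneralLinearGroup.coe_mul, inv_mul_cancel,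
      Matrix.GeneralLinearGroup.coe_one, Matrix.one_mulVec, Matrix.mulVec_zero] at this
  have hwv : (![w 0, w 1] : Fin 2 → F) ≠ 0 := by
    intro hc; apply hwne; funext i
    fin_cases i
    · exact congrFun hc 0
    · exact congrFun hc 1
  have key : (g : Matrix (Fin 2) (Fin 2) F).map (algebraMap F L) *ᵥ
      (![algebraMap F L a, algebraMap F L b] : Fin 2 → L) =
      ![algebraMap F L (w 0), algebraMap F L (w 1)] := by
    rw [vec_alg_eq, map_mulVec_alg]
    funext i; fin_cases i <;> simp [hw]
  refine ⟨w 0, w 1, algVec_ne hwv, ?_⟩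
  rw [smul_mk_ext g _ _ (key ▸ algVec_ne hwv)]
  exact Projectivization.mk_eq_mk_iff' _ _ _ _ _ |>.mpr ⟨1, by rw [one_smul, key]⟩

theorem smul_rat_mem_iff (g : GL (Fin 2) F) (P : Projectivization L (Fin 2 → L)) :
    g • P ∈ RatSet F L ↔ P ∈ RatSet F L := by
  constructor
  · intro h
    have := smul_rat_mem g⁻¹ h
    rwa [inv_smul_smul] at this
  · exact smul_rat_mem g

end rat

section rat2
variable {F L : Type*} [Field F] [Field L] [Algebra F L]

theorem ptInf_mem_rat : (ptInf : Projectivization L (Fin 2 → L)) ∈ RatSet F L := by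
  refine ⟨1, 0, algVec_ne (fun hc => one_ne_zero (α := F) (by simpa using congrFun hc 0)), ?_⟩
  rw [ptInf]
  exact Projectivization.mk_eq_mk_iff' _ _ _ _ _ |>.mpr
    ⟨1, by funext i; fin_cases i <;> simp⟩

theorem mkAlg_eq_inf (a : F) (h : (![algebraMap F L a, algebraMap F L 0] : Fin 2 → L) ≠ 0) :
    Projectivization.mk L _ h = (ptInf : Projectivization L (Fin 2 → L)) := by
  have ha : a ≠ 0 := by
    intro hc; apply h; funext i; fin_cases i <;> simp [hc]
  rw [ptInf]
  exact Projectivization.mk_eq_mk_iff' _ _ _ _ _ |>.mpr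
    ⟨algebraMap F L a, by funext i; fin_cases i <;> simp⟩

theorem mkAlg_eq_ptMk (a : F) {b : F} (hb : b ≠ 0)
    (h : (![algebraMap F L a, algebraMap F L b] : Fin 2 → L) ≠ 0) :
    Projectivization.mk L _ h = ptMk (algebraMap F L (a / b)) := by
  have hb' : algebraMap F L b ≠ 0 := by
    simpa using (map_ne_zero (algebraMap F L)).mpr hb
  rw [ptMk]
  refine Projectivization.mk_eq_mk_iff' _ _ _ _ _ |>.mpr ⟨algebraMap F L b, ?_⟩
  funext i
  fin_cases i <;> simp [map_div₀]
  rw [mul_comm, div_mul_cancel₀ _ hb']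

theorem ptMk_mem_rat_iff (x : L) :
    ptMk x ∈ RatSet F L ↔ x ∈ Set.range (algebraMap F L) := by
  constructor
  · rintro ⟨a, b, h, hP⟩
    by_cases hb : b = 0
    · subst hb
      rw [mkAlg_eq_inf a h] at hP
      exact absurd hP (ptMk_ne_inf x)
    · rw [mkAlg_eq_ptMk a hb h] at hP
      exact ⟨a / b, (ptMk_inj hP).symm⟩
  · rintro ⟨a, rfl⟩
    refine ⟨a, 1, algVec_ne (fun hc => one_ne_zero (α := F) (by simpa using congrFun hc 1)), ?_⟩
    rw [ptMk]
    exact Projectivization.mk_eq_mk_iff' _ _ _ _ _ |>.mpr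
      ⟨1, by funext i; fin_cases i <;> simp⟩

theorem not_rat_iff (P : Projectivization L (Fin 2 → L)) :
    P ∉ RatSet F L ↔ ∃ x : L, x ∉ Set.range (algebraMap F L) ∧ P = ptMk x := by
  rcases pt_cases P with rfl | ⟨x, rfl⟩
  · constructor
    · intro h; exact absurd ptInf_mem_rat h
    · rintro ⟨x, -, hx⟩
      exact absurd hx.symm (ptMk_ne_inf x)
  · rw [ptMk_mem_rat_iff]
    constructor
    · exact fun h => ⟨x, h, rfl⟩
    · rintro ⟨y, hy, hxy⟩
      rwa [ptMk_inj hxy]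

end rat2

section indep
open Polynomial

theorem indep_of_deg_ge_three {F L : Type*} [Field F] [Field L] [Algebra F L]
    [FiniteDimensional F L] {x : L} (hx : x ∉ Set.range (algebraMap F L))
    (hodd : Odd (Module.finrank F L))
    (c0 c1 c2 : F)
    (h : algebraMap F L c0 + algebraMap F L c1 * x + algebraMap F L c2 * x ^ 2 = 0) :
    c0 = 0 ∧ c1 = 0 ∧ c2 = 0 := by
  have hint : IsIntegral F x := IsIntegral.of_finite F x
  set d := (minpoly F x).natDegree with hd
  have hdvd : d ∣ Module.finrank F L := by
    rw [hd, ← IntermediateField.adjoin.finrank hint]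
    exact ⟨Module.finrank (IntermediateField.adjoin F {x}) L,
      (Module.finrank_mul_finrank F (IntermediateField.adjoin F {x}) L).symm⟩
  have hd1 : d ≠ 1 := by
    intro hc
    exact hx ((minpoly.natDegree_eq_one_iff).mp hc)
  have hd2 : d ≠ 2 := by
    intro hc
    rw [hc] at hdvd
    rw [Nat.not_even_iff_odd.symm] at hodd
    exact hodd (even_iff_two_dvd.mpr hdvd)
  have hd0 : 0 < d := minpoly.natDegree_pos hint
  have hd3 : 3 ≤ d := by omega
  set q : F[X] := C c2 * X ^ 2 + C c1 * X + C c0 with hq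
  have haev : aeval x q = 0 := by
    have e : aeval x q =
        algebraMap F L c0 + algebraMap F L c1 * x + algebraMap F L c2 * x ^ 2 := by
      rw [hq]
      simp only [map_add, _root_.map_mul, aeval_C, aeval_X, map_pow]
      ring
    rw [e, h]
  have hq0 : q = 0 := by
    by_contra hq0
    have := minpoly.degree_le_of_ne_zero F x hq0 haev
    have h2 : (minpoly F x).natDegree ≤ q.natDegree :=
      Polynomial.natDegree_le_natDegree this
    have h3 : q.natDegree ≤ 2 := Polynomial.natDegree_quadratic_le
    omega
  refine ⟨?_, ?_, ?_⟩
  · have := congrArg (fun r => Polynomial.coeff r 0) hq0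
    simpa [hq, coeff_C] using this
  · have := congrArg (fun r => Polynomial.coeff r 1) hq0
    simpa [hq, coeff_C] using this
  · have := congrArg (fun r => Polynomial.coeff r 2) hq0
    simpa [hq, coeff_C] using this

end indep

section stab
variable {F L : Type*} [Field F] [Field L] [Algebra F L]

theorem mulVec_pt (M : Matrix (Fin 2) (Fin 2) F) (x : L) :
    M.map (algebraMap F L) *ᵥ ![x, 1] =
      ![algebraMap F L (M 0 0) * x + algebraMap F L (M 0 1),
        algebraMap F L (M 1 0) * x + algebraMap F L (M 1 1)] := by
  funext i
  fin_cases i <;> simp [Matrix.mulVec, dotProduct, Fin.sum_univ_two]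

/-- The scalar-matrix homomorphism `Fˣ →* GL₂(F)`. -/
noncomputable def scalarGL : Fˣ →* GL (Fin 2) F :=
  Units.map (algebraMap F (Matrix (Fin 2) (Fin 2) F)).toMonoidHom

theorem scalarGL_coe (u : Fˣ) :
    ((scalarGL u : GL (Fin 2) F) : Matrix (Fin 2) (Fin 2) F) =
      Matrix.diagonal (fun _ => (u : F)) := by
  show algebraMap F (Matrix (Fin 2) (Fin 2) F) (u : F) = _
  rw [Matrix.algebraMap_eq_diagonal]
  rfl

theorem scalarGL_mem_stab (u : Fˣ) (x : L) :
    (scalarGL u : GL (Fin 2) F) ∈ MulAction.stabilizer (GL (Fin 2) F) (ptMk x) := by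
  rw [MulAction.mem_stabilizer_iff, ptMk]
  have hne : (Matrix.diagonal (fun _ => (u : F))).map (algebraMap F L) *ᵥ ![x, 1] ≠ 0 := by
    intro hc
    have := congrFun hc 1
    simp [Matrix.mulVec, dotProduct, Fin.sum_univ_two, Matrix.diagonal] at this
  have h' : ((scalarGL u : GL (Fin 2) F) : Matrix (Fin 2) (Fin 2) F).map (algebraMap F L)
      *ᵥ ![x, 1] ≠ 0 := by rw [scalarGL_coe]; exact hne
  rw [smul_mk_ext _ _ _ h']
  refine (Projectivization.mk_eq_mk_iff' _ _ _ _ _).mpr ⟨algebraMap F L (u : F), ?_⟩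
  rw [scalarGL_coe, mulVec_pt]
  funext i
  fin_cases i <;> simp [Matrix.diagonal]

end stab

section stab2
variable {F L : Type*} [Field F] [Field L] [Algebra F L]

theorem stab_is_scalar {x : L}
    (hind : ∀ c0 c1 c2 : F,
      algebraMap F L c0 + algebraMap F L c1 * x + algebraMap F L c2 * x ^ 2 = 0 →
      c0 = 0 ∧ c1 = 0 ∧ c2 = 0)
    (g : GL (Fin 2) F) (hg : g • ptMk x = ptMk x) :
    ∃ u : Fˣ, scalarGL u = g := by
  set M : Matrix (Fin 2) (Fin 2) F := (g : Matrix (Fin 2) (Fin 2) F) with hM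
  have h' : M.map (algebraMap F L) *ᵥ ![x, 1] ≠ 0 := by
    intro hc
    apply vecne x
    have h2 := congrArg (fun w =>
      ((g⁻¹ : GL (Fin 2) F) : Matrix (Fin 2) (Fin 2) F).map (algebraMap F L) *ᵥ w) hc
    simp only [Matrix.mulVec_zero] at h2
    rwa [Matrix.mulVec_mulVec, ← Matrix.map_mul, ← Units.val_mul, inv_mul_cancel,
      Units.val_one, Matrix.map_one _ (map_zero _) (map_one _), Matrix.one_mulVec] at h2
  rw [ptMk, smul_mk_ext g _ _ h'] at hg
  obtain ⟨lam, hlam⟩ := (Projectivization.mk_eq_mk_iff' _ _ _ _ _).mp hg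
  rw [mulVec_pt] at hlam
  have h0 := congrFun hlam 0
  have h1 := congrFun hlam 1
  simp only [Matrix.cons_val_zero, Matrix.cons_val_one, Matrix.head_cons,
    Pi.smul_apply, smul_eq_mul, mul_one] at h0 h1
  have key : algebraMap F L (M 0 1) + algebraMap F L (M 0 0 - M 1 1) * x +
      algebraMap F L (- M 1 0) * x ^ 2 = 0 := by
    simp only [map_neg, map_sub]
    linear_combination x * h1 - h0
  obtain ⟨e1, e2, e3⟩ := hind _ _ _ key
  have hb : M 0 1 = 0 := e1
  have hc : M 1 0 = 0 := by simpa using e3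
  have hd : M 0 0 = M 1 1 := by rwa [sub_eq_zero] at e2
  have hdetU : IsUnit M.det := (Matrix.isUnit_iff_isUnit_det M).mp g.isUnit
  have ha : M 0 0 ≠ 0 := by
    intro hc0
    apply hdetU.ne_zero
    rw [Matrix.det_fin_two, hb, hc, hc0]
    ring
  refine ⟨Units.mk0 (M 0 0) ha, ?_⟩
  apply Units.ext
  rw [scalarGL_coe]
  ext i j
  fin_cases i <;> fin_cases j <;>
    simp only [Matrix.diagonal, Units.val_mk0, Matrix.of_apply, hd] <;>
    first
      | rfl
      | exact hd.symm
      | exact hb.symm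
      | exact hc.symm
      | simp

end stab2

section cards
variable {F L : Type*} [Field F] [Field L] [Algebra F L]

theorem card_stab {x : L}
    (hind : ∀ c0 c1 c2 : F,
      algebraMap F L c0 + algebraMap F L c1 * x + algebraMap F L c2 * x ^ 2 = 0 →
      c0 = 0 ∧ c1 = 0 ∧ c2 = 0) :
    Nat.card (MulAction.stabilizer (GL (Fin 2) F) (ptMk x)) = Nat.card Fˣ := by
  refine (Nat.card_eq_of_bijective
    (fun u => ⟨scalarGL u, scalarGL_mem_stab u x⟩) ⟨?_, ?_⟩).symm
  · intro u v huv
    have h := congrArg (fun g : MulAction.stabilizer (GL (Fin 2) F) (ptMk x) =>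
      ((g : GL (Fin 2) F) : Matrix (Fin 2) (Fin 2) F) 0 0) huv
    simp only [scalarGL_coe] at h
    exact Units.ext (by simpa [Matrix.diagonal] using h)
  · rintro ⟨g, hg⟩
    obtain ⟨u, hu⟩ := stab_is_scalar hind g (MulAction.mem_stabilizer_iff.mp hg)
    exact ⟨u, Subtype.ext hu⟩

instance finiteProj [Finite L] : Finite (Projectivization L (Fin 2 → L)) := by
  have : Function.Surjective
      (fun v : {v : Fin 2 → L // v ≠ 0} => Projectivization.mk L v.1 v.2) := by
    intro P
    induction P using Projectivization.ind with
    | h v hv => exact ⟨⟨v, hv⟩, rfl⟩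
  exact Finite.of_surjective _ this

theorem card_orbit_eq {x : L} [Fintype F] [Finite L]
    (hind : ∀ c0 c1 c2 : F,
      algebraMap F L c0 + algebraMap F L c1 * x + algebraMap F L c2 * x ^ 2 = 0 →
      c0 = 0 ∧ c1 = 0 ∧ c2 = 0) :
    Nat.card (MulAction.orbit (GL (Fin 2) F) (ptMk x)) * (Fintype.card F - 1) =
      (Fintype.card F ^ 2 - 1) * (Fintype.card F ^ 2 - Fintype.card F) := by
  have horb := Nat.card_congr (MulAction.orbitProdStabilizerEquivGroup (GL (Fin 2) F) (ptMk x))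
  rw [Nat.card_prod, card_stab hind] at horb
  have hu : Nat.card Fˣ = Fintype.card F - 1 := by
    rw [Nat.card_units, Nat.card_eq_fintype_card]
  rw [hu] at horb
  rw [horb, Matrix.card_GL_field]
  rw [Fin.prod_univ_two]
  norm_num

end cards

section counting
variable (F L : Type*) [Field F] [Field L] [Algebra F L]

theorem card_nonrat [Finite L] :
    Nat.card {P : Projectivization L (Fin 2 → L) // P ∉ RatSet F L} =
      Nat.card L - Nat.card F := by
  classical
  have e : {x : L // x ∉ Set.range (algebraMap F L)} ≃
      {P : Projectivization L (Fin 2 → L) // P ∉ RatSet F L} := by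
    refine Equiv.ofBijective
      (fun x => ⟨ptMk x.1, (not_rat_iff _).mpr ⟨x.1, x.2, rfl⟩⟩) ⟨?_, ?_⟩
    · intro x y hxy
      exact Subtype.ext (ptMk_inj (Subtype.mk_eq_mk.mp hxy))
    · rintro ⟨P, hP⟩
      obtain ⟨x, hx, rfl⟩ := (not_rat_iff P).mp hP
      exact ⟨⟨x, hx⟩, rfl⟩
  rw [← Nat.card_congr e]
  have hs := Nat.card_congr (Equiv.sumCompl (fun x : L => x ∈ Set.range (algebraMap F L)))
  rw [Nat.card_sum] at hs
  have hr : Nat.card {x : L // x ∈ Set.range (algebraMap F L)} = Nat.card F :=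
    Nat.card_congr (Equiv.ofInjective _ (algebraMap F L).injective).symm
  rw [hr] at hs
  have hle : Nat.card F ≤ Nat.card L := by
    rw [← hr, ← hs]; omega
  omega

/-- The set of orbits of non-rational points. -/
def OrbSet : Set (Set (Projectivization L (Fin 2 → L))) :=
  {O | ∃ P : Projectivization L (Fin 2 → L),
    P ∉ RatSet F L ∧ O = MulAction.orbit (GL (Fin 2) F) P}

variable {F L}

theorem notrat_of_mem_orbit {P Q : Projectivization L (Fin 2 → L)}
    (hQ : Q ∉ RatSet F L) (h : P ∈ MulAction.orbit (GL (Fin 2) F) Q) :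
    P ∉ RatSet F L := by
  obtain ⟨g, rfl⟩ := h
  rwa [smul_rat_mem_iff]

noncomputable def orbSigmaEquiv :
    {P : Projectivization L (Fin 2 → L) // P ∉ RatSet F L} ≃
      Σ O : OrbSet F L, (O : Set (Projectivization L (Fin 2 → L))) where
  toFun P := ⟨⟨MulAction.orbit (GL (Fin 2) F) P.1, ⟨P.1, P.2, rfl⟩⟩,
    ⟨P.1, MulAction.mem_orbit_self _⟩⟩
  invFun x := ⟨(x.2 : Projectivization L (Fin 2 → L)),
    notrat_of_mem_orbit x.1.2.choose_spec.1 (x.1.2.choose_spec.2 ▸ x.2.2)⟩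
  left_inv P := rfl
  right_inv := by
    rintro ⟨⟨O, hO⟩, q⟩
    obtain ⟨Q, hQ, rfl⟩ : ∃ Q, Q ∉ RatSet F L ∧ O = MulAction.orbit (GL (Fin 2) F) Q := hO
    have horb : MulAction.orbit (GL (Fin 2) F) (q : Projectivization L (Fin 2 → L)) =
        MulAction.orbit (GL (Fin 2) F) Q := MulAction.orbit_eq_iff.mpr q.2
    refine Sigma.ext (Subtype.ext horb) ?_
    refine (Subtype.heq_iff_coe_eq (fun P => ?_)).mpr rfl
    show P ∈ MulAction.orbit (GL (Fin 2) F) (q : Projectivization L (Fin 2 → L)) ↔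
      P ∈ MulAction.orbit (GL (Fin 2) F) Q
    rw [horb]

theorem card_nonrat_eq_card_orbs_mul [Finite L] (c : ℕ)
    (hc : ∀ O ∈ OrbSet F L, Nat.card O = c) :
    Nat.card L - Nat.card F = Nat.card (OrbSet F L) * c := by
  classical
  rw [← card_nonrat F L, Nat.card_congr (orbSigmaEquiv (F := F) (L := L))]
  letI : Fintype (OrbSet F L) := Fintype.ofFinite _
  letI : ∀ O : OrbSet F L, Fintype O := fun O => Fintype.ofFinite _
  rw [Nat.card_eq_fintype_card, Fintype.card_sigma, Nat.card_eq_fintype_card,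
    Fintype.card_congr (Equiv.refl _)]
  rw [Finset.sum_congr rfl (fun O _ => ?_), Finset.sum_const, Finset.card_univ, smul_eq_mul]
  rw [← Nat.card_eq_fintype_card, hc O.1 O.2]

end counting

/-- Let `q = p^f` with `f` odd, `f > 1`.  Every `GL₂(𝔽_p)`-orbit on
`ℙ¹(𝔽_q) \ ℙ¹(𝔽_p)` has cardinality `p(p² − 1)`, and the number of such orbits is
`(p^(f−1) − 1)/(p² − 1)` (stated multiplicatively to avoid division). -/
theorem orbit_count_complement_P1Fp (p f : ℕ) [Fact p.Prime] (hf1 : Odd f) (hf2 : 1 < f) :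
    (∀ P : Projectivization (GaloisField p f) (Fin 2 → GaloisField p f),
      (¬ ∃ (a b : ZMod p)
          (h : (![algebraMap (ZMod p) (GaloisField p f) a,
                  algebraMap (ZMod p) (GaloisField p f) b] : Fin 2 → GaloisField p f) ≠ 0),
          P = Projectivization.mk (GaloisField p f) _ h) →
      Nat.card (MulAction.orbit (GL (Fin 2) (ZMod p)) P) = p * (p ^ 2 - 1)) ∧
    Nat.card {O : Set (Projectivization (GaloisField p f) (Fin 2 → GaloisField p f)) |
        ∃ P : Projectivization (GaloisField p f) (Fin 2 → GaloisField p f),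
          (¬ ∃ (a b : ZMod p)
              (h : (![algebraMap (ZMod p) (GaloisField p f) a,
                      algebraMap (ZMod p) (GaloisField p f) b] : Fin 2 → GaloisField p f) ≠ 0),
              P = Projectivization.mk (GaloisField p f) _ h) ∧
          O = MulAction.orbit (GL (Fin 2) (ZMod p)) P}
      * (p ^ 2 - 1) = p ^ (f - 1) - 1 := by
  have hp : p.Prime := Fact.out
  have hp2 : 2 ≤ p := hp.two_le
  have hf0 : f ≠ 0 := by omega
  have hodd : Odd (Module.finrank (ZMod p) (GaloisField p f)) := by
    rw [GaloisField.finrank p hf0]; exact hf1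
  -- every orbit of a non-rational point has cardinality p(p²-1)
  have orbcard : ∀ P : Projectivization (GaloisField p f) (Fin 2 → GaloisField p f),
      P ∉ RatSet (ZMod p) (GaloisField p f) →
      Nat.card (MulAction.orbit (GL (Fin 2) (ZMod p)) P) = p * (p ^ 2 - 1) := by
    intro P hP
    obtain ⟨x, hx, rfl⟩ := (not_rat_iff P).mp hP
    have hind := fun c0 c1 c2 hrel => indep_of_deg_ge_three hx hodd c0 c1 c2 hrel
    have h1 := card_orbit_eq hind
    rw [ZMod.card] at h1
    have h2 : p ^ 2 - p = p * (p - 1) := by rw [Nat.mul_sub, mul_one, ← pow_two]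
    rw [h2] at h1
    set a := p ^ 2 - 1
    set b := p - 1 with hb
    have h3 : a * (p * b) = (p * a) * b := by ring
    rw [h3] at h1
    exact Nat.eq_of_mul_eq_mul_right (by omega) h1
  constructor
  · intro P hP
    exact orbcard P hP
  · have hc : ∀ O ∈ OrbSet (ZMod p) (GaloisField p f), Nat.card O = p * (p ^ 2 - 1) := by
      rintro O ⟨P, hP, rfl⟩
      exact orbcard P hP
    have hmain := card_nonrat_eq_card_orbs_mul (F := ZMod p) (L := GaloisField p f) _ hc
    rw [GaloisField.card p f hf0, Nat.card_zmod] at hmain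
    -- hmain : p ^ f - p = Nat.card (OrbSet ...) * (p * (p ^ 2 - 1))
    have hq : p ^ f = p * p ^ (f - 1) := by
      conv_lhs => rw [show f = (f - 1) + 1 by omega]
      rw [pow_succ']
    have hsub : p ^ f - p = p * (p ^ (f - 1) - 1) := by
      rw [hq, Nat.mul_sub, mul_one]
    rw [hsub] at hmain
    set N := Nat.card (OrbSet (ZMod p) (GaloisField p f)) with hN
    have h4 : N * (p * (p ^ 2 - 1)) = p * (N * (p ^ 2 - 1)) := by ring
    rw [h4] at hmain
    have h5 := Nat.eq_of_mul_eq_mul_left (show 0 < p by omega) hmain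
    exact h5.symm
end

section
/- Let p be an odd prime, q = p^f with f even, and ε ∈ 𝔽_{q²} \ 𝔽_q with ε² ∈ 𝔽_q. Then T_q ∩ GL₂(𝔽_p) = Z_p, where T_q = {(a b; bε² a) : a,b ∈ 𝔽_q not both zero} and Z_p is the group of scalar matrices over 𝔽_p. In particular, for f even the torus T_p of GL₂(𝔽_p) is not contained in T_q. -/
lemma two_mul_pred_dvd (p f : ℕ) (hp : Odd p) (hf : Even f) :
    2 * (p - 1) ∣ p ^ f - 1 := by
  obtain ⟨m, rfl⟩ := hf
  obtain ⟨r, rfl⟩ := hp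
  have h1 : (2*r+1) ^ (m + m) - 1 = ((2*r+1)^2)^m - 1^m := by
    have hmm : m + m = 2*m := by omega
    rw [hmm, one_pow, pow_mul]
  have h2 : (2*r+1)^2 - 1 ∣ ((2*r+1)^2)^m - 1^m := Nat.sub_dvd_pow_sub_pow _ _ m
  have h3 : (2*r+1)^2 - 1 = 2 * ((2*r+1) - 1) * (r+1) := by
    have h : (2*r+1)^2 = 4*(r*r) + 4*r + 1 := by ring
    have h' : 2 * ((2*r+1) - 1) * (r+1) = 4*(r*r) + 4*r := by
      have : (2*r+1) - 1 = 2*r := by omega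
      rw [this]; ring
    omega
  rw [h1]
  exact dvd_trans ⟨r+1, h3⟩ h2

lemma isSq_of_range (p f : ℕ) [Fact p.Prime] (hp : Odd p) (hf : Even f) (hf0 : f ≠ 0)
    (F : Type*) [Field F] [Algebra (ZMod p) F] [Fintype F]
    (hF : Fintype.card F = p ^ f) (x : ZMod p) :
    IsSquare (algebraMap (ZMod p) F x) := by
  rcases eq_or_ne x 0 with rfl | hx
  · simp
  have hinj := (algebraMap (ZMod p) F).injective
  have hy : (algebraMap (ZMod p) F x) ≠ 0 := fun h => hx (hinj (by rw [h, map_zero]))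
  haveI : CharP F p := charP_of_injective_ringHom hinj p
  have hchar : ringChar F ≠ 2 := by
    have : ringChar F = p := ringChar.eq F p
    rw [this]
    rintro rfl
    exact (by decide : ¬ Odd 2) hp
  have hord : (algebraMap (ZMod p) F x)^(p-1) = 1 := by
    rw [← map_pow, ZMod.pow_card_sub_one_eq_one hx, _root_.map_one]
  obtain ⟨k, hk⟩ := two_mul_pred_dvd p f hp hf
  have hcard : Fintype.card F / 2 = (p-1) * k := by
    rw [hF]
    have hp1 : 1 ≤ p := (Fact.out : p.Prime).one_lt.le
    have h1 : 1 ≤ p ^ f := Nat.one_le_pow _ _ (by omega)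
    have hk' : p ^ f - 1 = 2 * ((p-1) * k) := by rw [hk]; ring
    omega
  rw [FiniteField.isSquare_iff hchar hy, hcard, pow_mul, hord, one_pow]

lemma not_sq_e {F L : Type*} [Field F] [Field L] [Algebra F L] (ε : L)
    (hε : ε ∉ Set.range (algebraMap F L)) (e : F) (he : algebraMap F L e = ε ^ 2) :
    ¬ IsSquare e := by
  rintro ⟨c, rfl⟩
  have h : algebraMap F L c * algebraMap F L c = ε * ε := by
    rw [← _root_.map_mul, he, sq]
  rcases mul_self_eq_mul_self_iff.mp h with h' | h'
  · exact hε ⟨c, h'⟩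
  · exact hε ⟨-c, by rw [map_neg, h', neg_neg]⟩

/-- Let `p` be an odd prime, `q = p^f` with `f` even, and `ε ∈ 𝔽_{q²} \ 𝔽_q` with
`ε² ∈ 𝔽_q`, say `ε² = algebraMap e` with `e ∈ 𝔽_q = F`.  Then
`T_q ∩ GL₂(𝔽_p) = Z_p`: a matrix `g ∈ GL₂(𝔽_q)` has all entries in `𝔽_p` and lies in
the anisotropic torus `T_q` (i.e. `g 1 1 = g 0 0` and `g 1 0 = e * g 0 1`) iff it is a
scalar matrix with entry in `𝔽_p`.  In particular, for `η ∈ 𝔽_{p²} \ 𝔽_p` with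
`η² = algebraMap t`, `t ∈ 𝔽_p`, the torus `T_p` of `GL₂(𝔽_p)` is not contained in
`T_q`. -/
theorem torus_inter_GL2p_eq_center_even (p f : ℕ) [Fact p.Prime] (hp : Odd p) (hf : Even f)
    (hf0 : f ≠ 0) (F L : Type*) [Field F] [Field L] [Algebra (ZMod p) F] [Algebra F L]
    [Fintype F] [Fintype L] (hF : Fintype.card F = p ^ f) (hL : Fintype.card L = p ^ (2 * f))
    (ε : L) (hε : ε ∉ Set.range (algebraMap F L)) (e : F) (he : algebraMap F L e = ε ^ 2)
    (η : GaloisField p 2) (hη : η ∉ Set.range (algebraMap (ZMod p) (GaloisField p 2)))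
    (t : ZMod p) (ht : algebraMap (ZMod p) (GaloisField p 2) t = η ^ 2) :
    (∀ g : GL (Fin 2) F,
      ((∀ i j, (g : Matrix (Fin 2) (Fin 2) F) i j ∈ Set.range (algebraMap (ZMod p) F)) ∧
        (g : Matrix (Fin 2) (Fin 2) F) 1 1 = (g : Matrix (Fin 2) (Fin 2) F) 0 0 ∧
        (g : Matrix (Fin 2) (Fin 2) F) 1 0 = e * (g : Matrix (Fin 2) (Fin 2) F) 0 1) ↔
      ((g : Matrix (Fin 2) (Fin 2) F) 0 1 = 0 ∧ (g : Matrix (Fin 2) (Fin 2) F) 1 0 = 0 ∧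
        (g : Matrix (Fin 2) (Fin 2) F) 1 1 = (g : Matrix (Fin 2) (Fin 2) F) 0 0 ∧
        (g : Matrix (Fin 2) (Fin 2) F) 0 0 ∈ Set.range (algebraMap (ZMod p) F))) ∧
    ¬ (∀ g : GL (Fin 2) F,
        ((∀ i j, (g : Matrix (Fin 2) (Fin 2) F) i j ∈ Set.range (algebraMap (ZMod p) F)) ∧
          (g : Matrix (Fin 2) (Fin 2) F) 1 1 = (g : Matrix (Fin 2) (Fin 2) F) 0 0 ∧
          (g : Matrix (Fin 2) (Fin 2) F) 1 0 =
            algebraMap (ZMod p) F t * (g : Matrix (Fin 2) (Fin 2) F) 0 1) →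
        ((g : Matrix (Fin 2) (Fin 2) F) 1 1 = (g : Matrix (Fin 2) (Fin 2) F) 0 0 ∧
          (g : Matrix (Fin 2) (Fin 2) F) 1 0 = e * (g : Matrix (Fin 2) (Fin 2) F) 0 1)) := by
  have hinj := (algebraMap (ZMod p) F).injective
  have hnse : ¬ IsSquare e := not_sq_e ε hε e he
  constructor
  · intro g
    constructor
    · rintro ⟨hrange, h11, h10⟩
      have h01 : (g : Matrix (Fin 2) (Fin 2) F) 0 1 = 0 := by
        by_contra hne
        obtain ⟨a, ha⟩ := hrange 1 0
        obtain ⟨b, hb⟩ := hrange 0 1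
        have hbF : algebraMap (ZMod p) F b ≠ 0 := by rw [hb]; exact hne
        have hab : algebraMap (ZMod p) F a = e * algebraMap (ZMod p) F b := by
          rw [ha, hb]; exact h10
        have he' : e = algebraMap (ZMod p) F (a * b⁻¹) := by
          rw [_root_.map_mul, map_inv₀, hab, mul_inv_cancel_right₀ hbF]
        exact hnse (he' ▸ isSq_of_range p f hp hf hf0 F hF (a * b⁻¹))
      exact ⟨h01, by rw [h10, h01, mul_zero], h11, hrange 0 0⟩
    · rintro ⟨h01, h10, h11, h00⟩
      refine ⟨?_, h11, by rw [h10, h01, mul_zero]⟩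
      intro i j
      fin_cases i <;> fin_cases j
      · exact h00
      · exact h01 ▸ ⟨0, map_zero _⟩
      · exact h10 ▸ ⟨0, map_zero _⟩
      · exact h11 ▸ h00
  · intro h
    have ht0 : t ≠ 0 := by
      rintro rfl
      refine hη ⟨0, ?_⟩
      have : η ^ 2 = 0 := by rw [← ht, map_zero]
      rw [map_zero, (pow_eq_zero_iff (two_ne_zero)).mp this]
    have htF : algebraMap (ZMod p) F t ≠ 0 := fun hz => ht0 (hinj (by rw [hz, map_zero]))
    set A : Matrix (Fin 2) (Fin 2) F := !![0, 1; algebraMap (ZMod p) F t, 0] with hA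
    have hdet : A.det ≠ 0 := by
      rw [hA, Matrix.det_fin_two_of]
      simpa using htF
    set g : GL (Fin 2) F := Matrix.GeneralLinearGroup.mkOfDetNeZero A hdet with hg
    have hcoe : (g : Matrix (Fin 2) (Fin 2) F) = A := rfl
    have h00 : (g : Matrix (Fin 2) (Fin 2) F) 0 0 = 0 := by rw [hcoe, hA]; simp
    have h01 : (g : Matrix (Fin 2) (Fin 2) F) 0 1 = 1 := by rw [hcoe, hA]; simp
    have h10 : (g : Matrix (Fin 2) (Fin 2) F) 1 0 = algebraMap (ZMod p) F t := by
      rw [hcoe, hA]; simp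
    have h11 : (g : Matrix (Fin 2) (Fin 2) F) 1 1 = 0 := by rw [hcoe, hA]; simp
    have hpre : ∀ i j, (g : Matrix (Fin 2) (Fin 2) F) i j ∈ Set.range (algebraMap (ZMod p) F) := by
      intro i j
      fin_cases i <;> fin_cases j
      · exact h00 ▸ ⟨0, map_zero _⟩
      · exact h01 ▸ ⟨1, _root_.map_one _⟩
      · exact h10 ▸ ⟨t, rfl⟩
      · exact h11 ▸ ⟨0, map_zero _⟩
    obtain ⟨-, hbad⟩ := h g ⟨hpre, by rw [h11, h00], by rw [h10, h01, mul_one]⟩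
    have het : e = algebraMap (ZMod p) F t := by
      rw [h10, h01, mul_one] at hbad; exact hbad.symm
    exact hnse (het ▸ isSq_of_range p f hp hf hf0 F hF t)
end
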